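/- arXiv:2003.04384 — 3 statements merged into one kernel-verified Lean document; each statement's English description precedes it below -/
import Mathlib

section
/- Let m ∈ ℓ∞(G)* and let x be a character of G with m(x) ≠ 0. Then Ann_L(m) + ℂ·ε = Inv_L(m,x); that is, f ∈ ℓ¹(G) satisfies f*m = f(x)·m if and only if f = g + c·ε for some g ∈ ℓ¹(G) with g*m = 0 and some c ∈ ℂ. -/
set_option linter.unusedSectionVars false

open scoped ENNReal ComplexOrder

noncomputable section

namespace QG

variable {G : Type*} [Group G]

/-- `ℓ∞(G)`: bounded complex functions on `G`. -/
abbrev Linf (G : Type*) : Type _ := lp (fun _ : G => ℂ) ∞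

/-- `ℓ¹(G)`: summable complex functions on `G`. -/
abbrev L1 (G : Type*) : Type _ := lp (fun _ : G => ℂ) 1

/-- The dual space `ℓ∞(G)*`. -/
abbrev DualLinf (G : Type*) : Type _ := StrongDual ℂ (Linf G)

lemma summable_norm (f : L1 G) : Summable fun s => ‖f s‖ := by
  have h := (lp.memℓp f).summable (by simp)
  simpa using h

lemma norm_apply_le (x : Linf G) (s : G) : ‖x s‖ ≤ ‖x‖ :=
  lp.norm_apply_le_norm ENNReal.top_ne_zero x s

/-- The constant function `1` in `ℓ∞(G)`. -/
def one' : Linf G :=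
  ⟨fun _ => (1 : ℂ), memℓp_infty ⟨1, by rintro r ⟨t, rfl⟩; simp⟩⟩

/-- Left translation: `(L_s x)(t) = x (s * t)`. -/
def Ltrans (s : G) (x : Linf G) : Linf G :=
  ⟨fun t => x (s * t),
    memℓp_infty (BddAbove.mono (by rintro r ⟨t, rfl⟩; exact ⟨s * t, rfl⟩) (lp.memℓp x).bddAbove)⟩

@[simp] lemma Ltrans_apply (s : G) (x : Linf G) (t : G) : Ltrans s x t = x (s * t) := rfl

lemma norm_Ltrans_le (s : G) (x : Linf G) : ‖Ltrans s x‖ ≤ ‖x‖ := by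
  rw [lp.norm_eq_ciSup]
  exact ciSup_le fun t => norm_apply_le x (s * t)

/-- The action `m * x` of `m ∈ ℓ∞(G)*` on `x ∈ ℓ∞(G)`: `(m*x)(s) = m (L_s x)`. -/
def starAct (m : DualLinf G) (x : Linf G) : Linf G :=
  ⟨fun s => m (Ltrans s x),
    memℓp_infty ⟨‖m‖ * ‖x‖, by
      rintro r ⟨s, rfl⟩
      calc ‖m (Ltrans s x)‖ ≤ ‖m‖ * ‖Ltrans s x‖ := m.le_opNorm _
        _ ≤ ‖m‖ * ‖x‖ :=
          mul_le_mul_of_nonneg_left (norm_Ltrans_le s x) (norm_nonneg m)⟩⟩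

@[simp] lemma starAct_apply (m : DualLinf G) (x : Linf G) (s : G) :
    starAct m x s = m (Ltrans s x) := rfl

lemma summable_mul_bound (f : L1 G) (x : Linf G) (t : G) :
    Summable fun s => ‖f s * x (s * t)‖ := by
  refine Summable.of_nonneg_of_le (fun s => norm_nonneg _) (fun s => ?_)
    ((summable_norm f).mul_right ‖x‖)
  rw [norm_mul]
  exact mul_le_mul_of_nonneg_left (norm_apply_le x (s * t)) (norm_nonneg _)

/-- The right action of `ℓ¹(G)` on `ℓ∞(G)`: `(x * f)(t) = ∑_s f s * x (s * t)`. -/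
def rAct (x : Linf G) (f : L1 G) : Linf G :=
  ⟨fun t => ∑' s, f s * x (s * t),
    memℓp_infty ⟨(∑' s, ‖f s‖) * ‖x‖, by
      rintro r ⟨t, rfl⟩
      calc ‖∑' s, f s * x (s * t)‖ ≤ ∑' s, ‖f s * x (s * t)‖ :=
            norm_tsum_le_tsum_norm (summable_mul_bound f x t)
        _ ≤ ∑' s, ‖f s‖ * ‖x‖ :=
            Summable.tsum_le_tsum (fun s => by
                rw [norm_mul]
                exact mul_le_mul_of_nonneg_left (norm_apply_le x (s * t)) (norm_nonneg _))
              (summable_mul_bound f x t) ((summable_norm f).mul_right _)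
        _ = (∑' s, ‖f s‖) * ‖x‖ := tsum_mul_right⟩⟩

@[simp] lemma rAct_apply (x : Linf G) (f : L1 G) (t : G) :
    rAct x f t = ∑' s, f s * x (s * t) := rfl

/-- The shear equivalence of `G × G`. -/
def shearEquiv (G : Type*) [Group G] : G × G ≃ G × G where
  toFun p := (p.2, p.2⁻¹ * p.1)
  invFun p := (p.1 * p.2, p.1)
  left_inv p := by simp
  right_inv p := by simp

lemma conv_prod_summable (f g : L1 G) :
    Summable fun p : G × G => ‖f p.2‖ * ‖g (p.2⁻¹ * p.1)‖ := by
  have h0 : Summable fun p : G × G => ‖f p.1‖ * ‖g p.2‖ :=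
    (summable_norm f).mul_of_nonneg (summable_norm g) (fun _ => norm_nonneg _)
      (fun _ => norm_nonneg _)
  have key : Summable ((fun p : G × G => ‖f p.1‖ * ‖g p.2‖) ∘ (shearEquiv G)) :=
    (shearEquiv G).summable_iff.mpr h0
  have heq : ((fun p : G × G => ‖f p.1‖ * ‖g p.2‖) ∘ (shearEquiv G)) =
      fun p : G × G => ‖f p.2‖ * ‖g (p.2⁻¹ * p.1)‖ := by
    funext p
    simp [shearEquiv, Function.comp]
  rwa [heq] at key

lemma conv_memℓp (f g : L1 G) : Memℓp (fun t : G => ∑' s, f s * g (s⁻¹ * t)) 1 := by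
  have hp := conv_prod_summable f g
  obtain ⟨h1, h2⟩ :=
    (summable_prod_of_nonneg (fun p => mul_nonneg (norm_nonneg _) (norm_nonneg _))).1 hp
  apply memℓp_gen
  simp only [ENNReal.toReal_one, Real.rpow_one]
  refine Summable.of_nonneg_of_le (fun t => norm_nonneg _) (fun t => ?_) h2
  calc ‖∑' s, f s * g (s⁻¹ * t)‖ ≤ ∑' s, ‖f s * g (s⁻¹ * t)‖ :=
        norm_tsum_le_tsum_norm (by simpa only [norm_mul] using h1 t)
    _ = ∑' s, ‖f s‖ * ‖g (s⁻¹ * t)‖ := tsum_congr fun s => norm_mul _ _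

/-- Convolution on `ℓ¹(G)`: `(f * g)(t) = ∑_s f s * g (s⁻¹ t)`. -/
def conv (f g : L1 G) : L1 G :=
  ⟨fun t => ∑' s, f s * g (s⁻¹ * t), conv_memℓp f g⟩

@[simp] lemma conv_apply (f g : L1 G) (t : G) : conv f g t = ∑' s, f s * g (s⁻¹ * t) := rfl

open Classical in
/-- The unit `ε = δ_e` of the convolution algebra `ℓ¹(G)`. -/
def eps : L1 G :=
  ⟨fun t => if t = 1 then 1 else 0, by
    apply memℓp_gen
    refine summable_of_ne_finset_zero (s := ({1} : Finset G)) ?_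
    intro t ht
    simp only [Finset.mem_singleton] at ht
    simp [ht]⟩

open Classical in
/-- Multiplication by the indicator function of `H`: `f · 1_H`. -/
def mulIndic (H : Subgroup G) (f : L1 G) : L1 G :=
  ⟨fun s => if s ∈ H then f s else 0, by
    apply memℓp_gen
    simp only [ENNReal.toReal_one, Real.rpow_one]
    refine Summable.of_nonneg_of_le (fun s => norm_nonneg _) (fun s => ?_) (summable_norm f)
    by_cases h : s ∈ H <;> simp [h]⟩

open Classical in
/-- The indicator function `1_H ∈ ℓ∞(G)` of a subgroup `H`. -/
def indic (H : Subgroup G) : Linf G :=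
  ⟨fun s => if s ∈ H then 1 else 0,
    memℓp_infty ⟨1, by rintro r ⟨s, rfl⟩; by_cases h : s ∈ H <;> simp [h]⟩⟩

/-- A state on `ℓ∞(G)`: unital positive functional. -/
def IsState (m : DualLinf G) : Prop :=
  m one' = 1 ∧ ∀ x : Linf G, (∀ s, 0 ≤ x s) → 0 ≤ m x

/-- `f ∈ Ann_L(m)`, i.e. `f * m = 0`. -/
def memAnnL (m : DualLinf G) (f : L1 G) : Prop :=
  ∀ x : Linf G, ∑' s, f s * m (Ltrans s x) = 0

/-- `f ∈ Inv_L(m, x₀)`, i.e. `f * m = f(x₀) · m`. -/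
def memInvLx (m : DualLinf G) (x₀ : Linf G) (f : L1 G) : Prop :=
  ∀ x : Linf G, ∑' s, f s * m (Ltrans s x) = (∑' s, f s * x₀ s) * m x

/-- `f ∈ Inv_L(m)`, i.e. `f * m = f(1) · m`. -/
def memInvL (m : DualLinf G) (f : L1 G) : Prop :=
  ∀ x : Linf G, ∑' s, f s * m (Ltrans s x) = (∑' s, f s) * m x

/-- A right idempotent state: a state with `m (m * x) = m x` for all `x`. -/
def IsRightIdempotentState (m : DualLinf G) : Prop :=
  IsState m ∧ ∀ x : Linf G, m (starAct m x) = m x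

/-- A character of `G` in `ℓ∞(G)`. -/
def IsCharacter (x : Linf G) : Prop :=
  (∀ s t : G, x (s * t) = x s * x t) ∧ ∀ s : G, ‖x s‖ = 1

/-- `ℓ∞(G/H)`, the right-`H`-invariant elements of `ℓ∞(G)`. -/
def LinfQuot (H : Subgroup G) : Set (Linf G) :=
  {x | ∀ s : G, ∀ h ∈ H, x (s * h) = x s}

/-- `J¹(G,H)`, the preannihilator of `ℓ∞(G/H)` in `ℓ¹(G)`. -/
def J1 (H : Subgroup G) : Set (L1 G) :=
  {f | ∀ x ∈ LinfQuot H, ∑' s, f s * x s = 0}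

/-- `E` witnesses relative amenability of `ℓ∞(G/H)`: a unital positive
`ℓ¹(G)`-module map `ℓ∞(G) → ℓ∞(G)` with range inside `ℓ∞(G/H)`. -/
def IsRelAmenMap (H : Subgroup G) (E : Linf G →ₗ[ℂ] Linf G) : Prop :=
  E one' = one' ∧
  (∀ x : Linf G, (∀ s, 0 ≤ x s) → ∀ s, 0 ≤ E x s) ∧
  (∀ x : Linf G, E x ∈ LinfQuot H) ∧
  (∀ (x : Linf G) (f : L1 G), E (rAct x f) = rAct (E x) f)

/-- `ℓ∞(G/H)` is relatively amenable. -/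
def RelAmen (H : Subgroup G) : Prop :=
  ∃ E : Linf G →ₗ[ℂ] Linf G, IsRelAmenMap H E

/-- `ℓ∞(G/H)` is amenable. -/
def Amen (H : Subgroup G) : Prop :=
  ∃ E : Linf G →ₗ[ℂ] Linf G, IsRelAmenMap H E ∧ ∀ x ∈ LinfQuot H, E x = x

/-- Amenability of a discrete group: existence of a left invariant mean. -/
def GroupAmenable (K : Type*) [Group K] : Prop :=
  ∃ μ : DualLinf K, IsState μ ∧ ∀ (k : K) (y : Linf K), μ (Ltrans k y) = μ y

/-- `H`-invariance of a functional on `ℓ∞(G)`. -/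
def HInvariant (H : Subgroup G) (μ : DualLinf G) : Prop :=
  ∀ h ∈ H, ∀ x : Linf G, μ (Ltrans h x) = μ x

/-- `J` has a bounded right approximate identity contained in `S`. -/
def HasBraiIn (J S : Set (L1 G)) : Prop :=
  ∃ (ι : Type) (l : Filter ι) (e : ι → L1 G), l.NeBot ∧
    (∃ C : ℝ, ∀ i, ‖e i‖ ≤ C) ∧ (∀ i, e i ∈ S) ∧
    ∀ f ∈ J, Filter.Tendsto (fun i => ‖conv f (e i) - f‖) l (nhds 0)

lemma one'_mem_LinfQuot (H : Subgroup G) : (one' : Linf G) ∈ LinfQuot H :=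
  fun _ _ _ => rfl

lemma Ltrans_mem_LinfQuot {H : Subgroup G} {x : Linf G} (hx : x ∈ LinfQuot H) (s : G) :
    Ltrans s x ∈ LinfQuot H := by
  intro t h hh
  show x (s * (t * h)) = x (s * t)
  rw [← mul_assoc]
  exact hx (s * t) h hh

/-- `ℓ∞(G/H)` as a subspace of `ℓ∞(G)`. -/
def LinfQuotSub (H : Subgroup G) : Submodule ℂ (Linf G) where
  carrier := LinfQuot H
  add_mem' := by
    intro a b ha hb s h hh
    show (a + b : Linf G) (s * h) = (a + b : Linf G) s
    rw [lp.coeFn_add]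
    simp only [Pi.add_apply]
    rw [ha s h hh, hb s h hh]
  zero_mem' := by
    intro s h hh
    show (0 : Linf G) (s * h) = (0 : Linf G) s
    rw [lp.coeFn_zero]
    simp
  smul_mem' := by
    intro c a ha s h hh
    show (c • a : Linf G) (s * h) = (c • a : Linf G) s
    rw [lp.coeFn_smul]
    simp only [Pi.smul_apply]
    rw [ha s h hh]

/-- The weak* topology on `ℓ∞(G) = ℓ¹(G)*`: the topology induced by the
pairings against elements of `ℓ¹(G)`. -/
def weakStarTop (G : Type*) [Group G] : TopologicalSpace (Linf G) :=
  TopologicalSpace.induced (fun (y : Linf G) => fun f : L1 G => ∑' s, f s * y s)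
    Pi.topologicalSpace

lemma summable_mul_of_bdd (f : L1 G) (φ : G → ℂ) (C : ℝ) (hC : ∀ s, ‖φ s‖ ≤ C) :
    Summable fun s => f s * φ s := by
  refine Summable.of_norm (Summable.of_nonneg_of_le (fun s => norm_nonneg _) (fun s => ?_)
    ((summable_norm f).mul_right C))
  rw [norm_mul]
  exact mul_le_mul_of_nonneg_left (hC s) (norm_nonneg _)

lemma summable_mul_dual (f : L1 G) (m : DualLinf G) (y : Linf G) :
    Summable fun s => f s * m (Ltrans s y) := by
  refine summable_mul_of_bdd f _ (‖m‖ * ‖y‖) (fun s => ?_)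
  calc ‖m (Ltrans s y)‖ ≤ ‖m‖ * ‖Ltrans s y‖ := m.le_opNorm _
    _ ≤ ‖m‖ * ‖y‖ := mul_le_mul_of_nonneg_left (norm_Ltrans_le s y) (norm_nonneg m)

open Classical in
@[simp] lemma eps_apply (s : G) : (eps : L1 G) s = if s = 1 then 1 else 0 := rfl

lemma eps_tsum (h : G → ℂ) : ∑' s, (eps : L1 G) s * h s = h 1 := by
  classical
  rw [tsum_eq_single (1 : G) (fun b hb => by rw [eps_apply]; simp [hb])]
  rw [eps_apply]; simp

lemma Ltrans_one (y : Linf G) : Ltrans (1 : G) y = y := by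
  apply Subtype.ext
  funext t
  show y (1 * t) = y t
  rw [one_mul]

lemma char_one {x : Linf G} (hx : IsCharacter x) : x 1 = 1 := by
  have h := hx.1 1 1
  rw [one_mul] at h
  have hne : x 1 ≠ 0 := by
    intro h0
    have := hx.2 1
    rw [h0] at this
    simp at this
  exact mul_left_cancel₀ hne (h.symm.trans (mul_one _).symm)

lemma Ltrans_char {x : Linf G} (hx : IsCharacter x) (s : G) : Ltrans s x = x s • x := by
  apply Subtype.ext
  funext t
  show x (s * t) = (x s • x : Linf G) t
  rw [lp.coeFn_smul]
  simp only [Pi.smul_apply, smul_eq_mul]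
  exact hx.1 s t

lemma dual_Ltrans_char {x : Linf G} (hx : IsCharacter x) (m : DualLinf G) (s : G) :
    m (Ltrans s x) = x s * m x := by
  rw [Ltrans_char hx s, map_smul]
  simp

set_option maxHeartbeats 1000000 in
/-- `Ann_L(m) + ℂ·ε = Inv_L(m,x)` for a character `x` with `m(x) ≠ 0`. -/
theorem statement1 (m : DualLinf G) (x : Linf G) (hx : IsCharacter x) (hmx : m x ≠ 0)
    (f : L1 G) :
    memInvLx m x f ↔ ∃ (g : L1 G) (c : ℂ), memAnnL m g ∧ f = g + c • eps := by
  constructor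
  · intro hf
    set c : ℂ := ∑' s, f s * x s with hc
    refine ⟨f - c • eps, c, ?_, by abel⟩
    intro y
    have hcoe : ∀ s : G, (f - c • eps : L1 G) s = f s - c * (eps : L1 G) s := by
      intro s
      rw [lp.coeFn_sub]
      simp only [Pi.sub_apply]
      rw [lp.coeFn_smul]
      simp
    have h1 : Summable fun s => f s * m (Ltrans s y) := summable_mul_dual f m y
    have h2 : Summable fun s => (c • eps : L1 G) s * m (Ltrans s y) :=
      summable_mul_dual (c • eps) m y
    have h2' : Summable fun s => (c * (eps : L1 G) s) * m (Ltrans s y) := by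
      refine h2.congr fun s => ?_
      rw [lp.coeFn_smul]; simp
    calc ∑' s, (f - c • eps : L1 G) s * m (Ltrans s y)
        = ∑' s, (f s * m (Ltrans s y) - (c * (eps : L1 G) s) * m (Ltrans s y)) := by
          refine tsum_congr fun s => ?_
          rw [hcoe s, sub_mul]
      _ = (∑' s, f s * m (Ltrans s y)) - ∑' s, (c * (eps : L1 G) s) * m (Ltrans s y) :=
          Summable.tsum_sub h1 h2'
      _ = c * m y - c * m y := by
          rw [hf y, ← hc]
          congr 1
          calc ∑' s, (c * (eps : L1 G) s) * m (Ltrans s y)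
              = c * ∑' s, (eps : L1 G) s * m (Ltrans s y) := by
                rw [← tsum_mul_left]; exact tsum_congr fun s => by ring
            _ = c * m y := by rw [eps_tsum (fun s => m (Ltrans s y)), Ltrans_one]
      _ = 0 := sub_self _
  · rintro ⟨g, c, hg, rfl⟩
    have hcoe : ∀ s : G, (g + c • eps : L1 G) s = g s + c * (eps : L1 G) s := by
      intro s
      rw [lp.coeFn_add]
      simp only [Pi.add_apply]
      rw [lp.coeFn_smul]
      simp
    have hgx : ∑' s, g s * x s = 0 := by
      have h0 := hg x
      have heq : ∀ s, g s * m (Ltrans s x) = (g s * x s) * m x := fun s => by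
        rw [dual_Ltrans_char hx m s]; ring
      rw [tsum_congr heq, tsum_mul_right] at h0
      exact (mul_eq_zero.1 h0).resolve_right hmx
    have hsum_gx : Summable fun s => g s * x s :=
      summable_mul_of_bdd g _ 1 (fun s => le_of_eq (hx.2 s))
    have hsum_ex : Summable fun s => (c * (eps : L1 G) s) * x s := by
      have := summable_mul_of_bdd (c • eps) _ 1 (fun s => le_of_eq (hx.2 s))
      refine this.congr fun s => ?_
      rw [lp.coeFn_smul]; simp
    have hfx : ∑' s, (g + c • eps : L1 G) s * x s = c := by
      calc ∑' s, (g + c • eps : L1 G) s * x s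
          = ∑' s, (g s * x s + (c * (eps : L1 G) s) * x s) := by
            refine tsum_congr fun s => ?_
            rw [hcoe s, add_mul]
        _ = (∑' s, g s * x s) + ∑' s, (c * (eps : L1 G) s) * x s := Summable.tsum_add hsum_gx hsum_ex
        _ = 0 + c * ∑' s, (eps : L1 G) s * x s := by
            rw [hgx, ← tsum_mul_left]
            congr 1
            exact tsum_congr fun s => by ring
        _ = c := by rw [eps_tsum (fun s => x s), char_one hx]; ring
    intro y
    have h1 : Summable fun s => g s * m (Ltrans s y) := summable_mul_dual g m y
    have h2' : Summable fun s => (c * (eps : L1 G) s) * m (Ltrans s y) := by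
      have := summable_mul_dual (c • eps) m y
      refine this.congr fun s => ?_
      rw [lp.coeFn_smul]; simp
    calc ∑' s, (g + c • eps : L1 G) s * m (Ltrans s y)
        = ∑' s, (g s * m (Ltrans s y) + (c * (eps : L1 G) s) * m (Ltrans s y)) := by
          refine tsum_congr fun s => ?_
          rw [hcoe s, add_mul]
      _ = (∑' s, g s * m (Ltrans s y)) + ∑' s, (c * (eps : L1 G) s) * m (Ltrans s y) :=
          Summable.tsum_add h1 h2'
      _ = 0 + c * ∑' s, (eps : L1 G) s * m (Ltrans s y) := by
          rw [hg y, ← tsum_mul_left]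
          congr 1
          exact tsum_congr fun s => by ring
      _ = c * m y := by rw [eps_tsum (fun s => m (Ltrans s y)), Ltrans_one]; ring
      _ = (∑' s, (g + c • eps : L1 G) s * x s) * m y := by rw [hfx]

end QG
end
end

section
/- Let H be a subgroup of G. Then ℓ∞(G/H) is amenable if and only if there exists a state m on ℓ∞(G) with m(1_H) ≠ 0 such that (f·1_H)*m = f(1_H)·m for every f ∈ ℓ¹(G). -/
set_option linter.unusedSectionVars false

open scoped ENNReal ComplexOrder

noncomputable section

namespace QG

variable {G : Type*} [Group G]

/-! ### Auxiliary lemmas for statement 9 -/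

lemma lp_add_apply (x y : Linf G) (s : G) : (x + y) s = x s + y s := by
  rw [lp.coeFn_add]; rfl

lemma lp_smul_apply (k : ℂ) (x : Linf G) (s : G) : (k • x) s = k * x s := by
  rw [lp.coeFn_smul]; rfl

lemma lp_sub_apply (x y : Linf G) (s : G) : (x - y) s = x s - y s := by
  rw [lp.coeFn_sub]; rfl

lemma linf_ext {x y : Linf G} (h : ∀ s, x s = y s) : x = y := lp.ext (funext h)

@[simp] lemma one'_apply (s : G) : (one' : Linf G) s = 1 := rfl

open Classical in
lemma indic_apply (H : Subgroup G) (s : G) :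
    (indic H) s = if s ∈ H then 1 else 0 := rfl

open Classical in
lemma mulIndic_apply (H : Subgroup G) (f : L1 G) (s : G) :
    mulIndic H f s = if s ∈ H then f s else 0 := rfl

lemma indic_nonneg (H : Subgroup G) (s : G) : 0 ≤ (indic H) s := by
  rw [indic_apply]; split_ifs <;> norm_num

lemma norm_indic_le (H : Subgroup G) (s : G) : ‖(indic H) s‖ ≤ 1 := by
  rw [indic_apply]; split_ifs <;> simp

lemma indic_mem_LinfQuot (H : Subgroup G) : indic H ∈ LinfQuot H := by
  intro s h hh
  rw [indic_apply, indic_apply, Subgroup.mul_mem_cancel_right _ hh]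

open Classical in
/-- The Dirac delta at `s` as an element of `ℓ¹(G)`. -/
def delta (s : G) : L1 G :=
  ⟨fun t => if t = s then 1 else 0, by
    apply memℓp_gen
    refine summable_of_ne_finset_zero (s := ({s} : Finset G)) ?_
    intro t ht
    simp only [Finset.mem_singleton] at ht
    simp [ht]⟩

open Classical in
@[simp] lemma delta_apply (s t : G) : delta s t = if t = s then 1 else 0 := rfl

lemma rAct_delta (x : Linf G) (s : G) : rAct x (delta s) = Ltrans s x := by
  apply linf_ext
  intro t
  rw [rAct_apply, Ltrans_apply]
  rw [tsum_eq_single s]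
  · simp
  · intro u hu; simp [hu]

lemma tsum_mulIndic_delta (H : Subgroup G) {h : G} (hh : h ∈ H) (g : G → ℂ) :
    ∑' s, mulIndic H (delta h) s * g s = g h := by
  rw [tsum_eq_single h]
  · simp [mulIndic_apply, hh]
  · intro u hu; simp [mulIndic_apply, hu]

set_option maxHeartbeats 1000000 in
/-- Positive unital functionals on `ℓ∞(G)` are bounded (by `2`). -/
lemma norm_eval_le_two (φ : Linf G →ₗ[ℂ] ℂ) (h1 : φ one' = 1)
    (hpos : ∀ x : Linf G, (∀ s, 0 ≤ x s) → 0 ≤ φ x) (x : Linf G) :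
    ‖φ x‖ ≤ 2 * ‖x‖ := by
  have real_case : ∀ r : Linf G, (∀ s, (r s).im = 0) → ‖φ r‖ ≤ ‖r‖ := by
    intro r him
    set M : ℝ := ‖r‖ with hM
    have hub : ∀ s, |(r s).re| ≤ M := by
      intro s
      calc |(r s).re| ≤ ‖r s‖ := Complex.abs_re_le_norm _
        _ = ‖r s‖ := rfl
        _ ≤ M := norm_apply_le r s
    have hu : ∀ s, 0 ≤ ((M : ℂ) • one' - r : Linf G) s := by
      intro s
      rw [lp_sub_apply, lp_smul_apply, one'_apply, mul_one, Complex.le_def]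
      constructor
      · simp only [Complex.zero_re, Complex.sub_re, Complex.ofReal_re, sub_nonneg]
        exact le_trans (le_abs_self _) (hub s)
      · simp [him s]
    have hv : ∀ s, 0 ≤ ((M : ℂ) • one' + r : Linf G) s := by
      intro s
      rw [lp_add_apply, lp_smul_apply, one'_apply, mul_one, Complex.le_def]
      constructor
      · simp only [Complex.zero_re, Complex.add_re, Complex.ofReal_re]
        have := (abs_le.mp (hub s)).1
        linarith
      · simp [him s]
    have hu' := hpos _ hu
    have hv' := hpos _ hv
    rw [Complex.le_def] at hu' hv'
    have hsum : φ ((M : ℂ) • one' - r) + φ ((M : ℂ) • one' + r) = ((2 * M : ℝ) : ℂ) := by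
      rw [← map_add]
      have heq : ((M : ℂ) • one' - r) + ((M : ℂ) • one' + r)
          = ((2 * M : ℝ) : ℂ) • one' := by
        apply linf_ext
        intro s
        rw [lp_add_apply, lp_sub_apply, lp_add_apply, lp_smul_apply, lp_smul_apply,
          one'_apply]
        push_cast
        ring
      rw [heq, map_smul, h1, smul_eq_mul, mul_one]
    have hφr : φ r = (M : ℂ) - φ ((M : ℂ) • one' - r) := by
      have : φ ((M : ℂ) • one' - r) = (M : ℂ) * φ one' - φ r := by
        rw [map_sub, map_smul, smul_eq_mul]
      rw [this, h1, mul_one]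
      ring
    have hre : (φ ((M : ℂ) • one' - r)).re + (φ ((M : ℂ) • one' + r)).re = 2 * M := by
      have h := congrArg Complex.re hsum
      rw [Complex.add_re, Complex.ofReal_re] at h
      exact h
    have him' : (φ r).im = 0 := by
      have h2 : (φ ((M : ℂ) • one' - r)).im = 0 := by
        rw [← hu'.2, Complex.zero_im]
      rw [hφr, Complex.sub_im, h2, Complex.ofReal_im, sub_zero]
    have hre1 : |(φ r).re| ≤ M := by
      rw [hφr]
      simp only [Complex.sub_re, Complex.ofReal_re]
      rw [abs_le]
      constructor
      · have h2 : (φ ((M : ℂ) • one' - r)).re ≤ 2 * M := by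
          have := hv'.1
          simp only [Complex.zero_re] at this
          linarith
        linarith
      · have := hu'.1
        simp only [Complex.zero_re] at this
        linarith
    calc ‖φ r‖ = ‖φ r‖ := rfl
      _ ≤ |(φ r).re| + |(φ r).im| := Complex.norm_le_abs_re_add_abs_im _
      _ ≤ M := by rw [him']; simpa using hre1
  -- decompose x into real and imaginary parts
  have hbddre : ∀ (g : G → ℝ), (∀ s, |g s| ≤ ‖x s‖) →
      Memℓp (fun s => ((g s : ℝ) : ℂ)) (∞ : ℝ≥0∞) := by
    intro g hg
    refine memℓp_infty ⟨‖x‖, ?_⟩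
    rintro r ⟨t, rfl⟩
    calc ‖((g t : ℝ) : ℂ)‖ = |g t| := by simp
      _ ≤ ‖x t‖ := hg t
      _ ≤ ‖x‖ := norm_apply_le x t
  set r : Linf G := ⟨fun s => (((x s).re : ℝ) : ℂ),
    hbddre _ (fun s => by
      calc |(x s).re| ≤ ‖x s‖ := Complex.abs_re_le_norm _
        _ = ‖x s‖ := rfl)⟩ with hr
  set i : Linf G := ⟨fun s => (((x s).im : ℝ) : ℂ),
    hbddre _ (fun s => by
      calc |(x s).im| ≤ ‖x s‖ := Complex.abs_im_le_norm _
        _ = ‖x s‖ := rfl)⟩ with hi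
  have hxri : x = r + Complex.I • i := by
    apply linf_ext
    intro s
    rw [lp_add_apply, lp_smul_apply]
    show x s = ((x s).re : ℂ) + Complex.I * ((x s).im : ℂ)
    rw [mul_comm]
    exact (Complex.re_add_im (x s)).symm
  have hnr : ‖r‖ ≤ ‖x‖ := by
    rw [lp.norm_eq_ciSup]
    refine ciSup_le fun s => ?_
    show ‖(((x s).re : ℝ) : ℂ)‖ ≤ ‖x‖
    calc ‖(((x s).re : ℝ) : ℂ)‖ = |(x s).re| := by simp
      _ ≤ ‖x s‖ := Complex.abs_re_le_norm _
      _ = ‖x s‖ := rfl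
      _ ≤ ‖x‖ := norm_apply_le x s
  have hni : ‖i‖ ≤ ‖x‖ := by
    rw [lp.norm_eq_ciSup]
    refine ciSup_le fun s => ?_
    show ‖(((x s).im : ℝ) : ℂ)‖ ≤ ‖x‖
    calc ‖(((x s).im : ℝ) : ℂ)‖ = |(x s).im| := by simp
      _ ≤ ‖x s‖ := Complex.abs_im_le_norm _
      _ = ‖x s‖ := rfl
      _ ≤ ‖x‖ := norm_apply_le x s
  have hφr := real_case r (fun s => by simp [hr])
  have hφi := real_case i (fun s => by simp [hi])
  calc ‖φ x‖ = ‖φ r + Complex.I * φ i‖ := by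
        rw [hxri, map_add, map_smul, smul_eq_mul]
    _ ≤ ‖φ r‖ + ‖Complex.I * φ i‖ := norm_add_le _ _
    _ = ‖φ r‖ + ‖φ i‖ := by rw [norm_mul, Complex.norm_I, one_mul]
    _ ≤ ‖x‖ + ‖x‖ := add_le_add (le_trans hφr hnr) (le_trans hφi hni)
    _ = 2 * ‖x‖ := by ring

/-- Evaluation at the identity after applying `E`. -/
def evalAtOne (E : Linf G →ₗ[ℂ] Linf G) : Linf G →ₗ[ℂ] ℂ where
  toFun x := E x 1
  map_add' x y := by
    show E (x + y) 1 = E x 1 + E y 1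
    rw [map_add, lp_add_apply]
  map_smul' k x := by
    show E (k • x) 1 = k • E x 1
    rw [map_smul, lp_smul_apply, smul_eq_mul]

/-- Multiplication by the indicator of `H` in `ℓ∞(G)`. -/
def indicMul (H : Subgroup G) (x : Linf G) : Linf G :=
  ⟨fun s => (indic H) s * x s,
    memℓp_infty ⟨‖x‖, by
      rintro r ⟨t, rfl⟩
      calc ‖(indic H) t * x t‖ = ‖(indic H) t‖ * ‖x t‖ := norm_mul _ _
        _ ≤ 1 * ‖x t‖ := mul_le_mul_of_nonneg_right (norm_indic_le H t) (norm_nonneg _)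
        _ = ‖x t‖ := one_mul _
        _ ≤ ‖x‖ := norm_apply_le x t⟩⟩

@[simp] lemma indicMul_apply (H : Subgroup G) (x : Linf G) (s : G) :
    indicMul H x s = (indic H) s * x s := rfl

lemma norm_indicMul_le (H : Subgroup G) (x : Linf G) : ‖indicMul H x‖ ≤ ‖x‖ := by
  rw [lp.norm_eq_ciSup]
  refine ciSup_le fun t => ?_
  calc ‖indicMul H x t‖ = ‖(indic H) t‖ * ‖x t‖ := norm_mul _ _
    _ ≤ 1 * ‖x t‖ := mul_le_mul_of_nonneg_right (norm_indic_le H t) (norm_nonneg _)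
    _ = ‖x t‖ := one_mul _
    _ ≤ ‖x‖ := norm_apply_le x t

lemma indicMul_add (H : Subgroup G) (x y : Linf G) :
    indicMul H (x + y) = indicMul H x + indicMul H y := by
  apply linf_ext
  intro t
  rw [lp_add_apply, indicMul_apply, indicMul_apply, indicMul_apply, lp_add_apply]
  ring

lemma indicMul_smul (H : Subgroup G) (k : ℂ) (x : Linf G) :
    indicMul H (k • x) = k • indicMul H x := by
  apply linf_ext
  intro t
  rw [lp_smul_apply, indicMul_apply, indicMul_apply, lp_smul_apply]
  ring

lemma Ltrans_add (s : G) (x y : Linf G) :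
    Ltrans s (x + y) = Ltrans s x + Ltrans s y := by
  apply linf_ext
  intro t
  rw [lp_add_apply, Ltrans_apply, Ltrans_apply, Ltrans_apply, lp_add_apply]

lemma Ltrans_smul (s : G) (k : ℂ) (x : Linf G) :
    Ltrans s (k • x) = k • Ltrans s x := by
  apply linf_ext
  intro t
  rw [lp_smul_apply, Ltrans_apply, Ltrans_apply, lp_smul_apply]

lemma complex_div_nonneg {a c : ℂ} (ha : 0 ≤ a) (hc : 0 ≤ c) : 0 ≤ a / c := by
  rw [Complex.le_def] at ha hc
  have haa : a = ((a.re : ℝ) : ℂ) := by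
    apply Complex.ext <;> simp [← ha.2]
  have hcc : c = ((c.re : ℝ) : ℂ) := by
    apply Complex.ext <;> simp [← hc.2]
  rw [haa, hcc, ← Complex.ofReal_div]
  exact Complex.zero_le_real.mpr (div_nonneg (by simpa using ha.1) (by simpa using hc.1))

/-- The conditional-expectation-type map built from a suitable state. -/
def bigE (H : Subgroup G) (m : DualLinf G) : Linf G →ₗ[ℂ] Linf G where
  toFun x :=
    ⟨fun s => m (indicMul H (Ltrans s x)) / m (indic H),
      memℓp_infty ⟨‖m‖ * ‖x‖ * ‖m (indic H)‖⁻¹, by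
        rintro r ⟨s, rfl⟩
        show ‖m (indicMul H (Ltrans s x)) / m (indic H)‖ ≤ ‖m‖ * ‖x‖ * ‖m (indic H)‖⁻¹
        rw [div_eq_mul_inv, norm_mul, norm_inv]
        refine mul_le_mul_of_nonneg_right ?_ (inv_nonneg.mpr (norm_nonneg _))
        calc ‖m (indicMul H (Ltrans s x))‖ ≤ ‖m‖ * ‖indicMul H (Ltrans s x)‖ :=
              m.le_opNorm _
          _ ≤ ‖m‖ * ‖x‖ := mul_le_mul_of_nonneg_left
              (le_trans (norm_indicMul_le H _) (norm_Ltrans_le s x)) (norm_nonneg m)⟩⟩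
  map_add' x y := by
    apply linf_ext
    intro s
    rw [lp_add_apply]
    show m (indicMul H (Ltrans s (x + y))) / m (indic H)
        = m (indicMul H (Ltrans s x)) / m (indic H)
          + m (indicMul H (Ltrans s y)) / m (indic H)
    rw [Ltrans_add, indicMul_add, map_add, add_div]
  map_smul' k x := by
    apply linf_ext
    intro s
    rw [lp_smul_apply]
    show m (indicMul H (Ltrans s (k • x))) / m (indic H)
        = k * (m (indicMul H (Ltrans s x)) / m (indic H))
    rw [Ltrans_smul, indicMul_smul, map_smul, smul_eq_mul, mul_div_assoc]

@[simp] lemma bigE_apply (H : Subgroup G) (m : DualLinf G) (x : Linf G) (s : G) :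
    bigE H m x s = m (indicMul H (Ltrans s x)) / m (indic H) := rfl

/-- The evaluation functionals on `ℓ∞(G)` as continuous linear maps. -/
def evalCLM (u : G) : Linf G →L[ℂ] ℂ :=
  LinearMap.mkContinuous
    { toFun := fun x : Linf G => x u
      map_add' := fun x y => lp_add_apply x y u
      map_smul' := fun k x => lp_smul_apply k x u } 1
    (fun x => by rw [one_mul]; exact norm_apply_le x u)

@[simp] lemma evalCLM_apply (u : G) (x : Linf G) : evalCLM u x = x u := rfl

set_option maxHeartbeats 1000000 in
/-- `ℓ∞(G/H)` is amenable iff there is a state `m` with `m(1_H) ≠ 0`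
which is `ℓ¹(G)·1_H`-invariant. -/
theorem statement9 (H : Subgroup G) :
    Amen H ↔ ∃ m : DualLinf G, IsState m ∧ m (indic H) ≠ 0 ∧
      ∀ (f : L1 G) (x : Linf G),
        ∑' s, mulIndic H f s * m (Ltrans s x) = (∑' s, mulIndic H f s) * m x := by
  constructor
  · rintro ⟨E, ⟨hone, hpos, hquot, hmod⟩, hid⟩
    have hφ1 : evalAtOne E one' = 1 := by
      show E one' 1 = 1
      rw [hone]
      rfl
    have hφpos : ∀ x : Linf G, (∀ s, 0 ≤ x s) → 0 ≤ evalAtOne E x :=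
      fun x hx => hpos x hx 1
    set m : DualLinf G :=
      LinearMap.mkContinuous (evalAtOne E) 2 (norm_eval_le_two _ hφ1 hφpos) with hmdef
    have hmapp : ∀ x : Linf G, m x = E x 1 := fun x => rfl
    have hEL : ∀ (s : G) (x : Linf G), E (Ltrans s x) = Ltrans s (E x) := by
      intro s x
      rw [← rAct_delta x s, hmod, rAct_delta]
    have hmL : ∀ (s : G) (x : Linf G), m (Ltrans s x) = E x s := by
      intro s x
      rw [hmapp, hEL, Ltrans_apply, mul_one]
    refine ⟨m, ⟨hφ1, hφpos⟩, ?_, ?_⟩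
    · rw [hmapp, hid (indic H) (indic_mem_LinfQuot H), indic_apply, if_pos H.one_mem]
      exact one_ne_zero
    · intro f x
      have hsame : ∀ s, mulIndic H f s * m (Ltrans s x) = mulIndic H f s * m x := by
        intro s
        by_cases hs : s ∈ H
        · congr 1
          rw [hmL, hmapp]
          have h1 := hquot x 1 s hs
          rw [one_mul] at h1
          exact h1
        · rw [mulIndic_apply, if_neg hs, zero_mul, zero_mul]
      rw [tsum_congr hsame, tsum_mul_right]
  · rintro ⟨m, ⟨hm1, hmpos⟩, hc, hinv⟩
    haveI : Fact ((1 : ℝ≥0∞) ≤ ∞) := ⟨le_top⟩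
    have hc0 : 0 ≤ m (indic H) := hmpos _ (indic_nonneg H)
    have hinvh : ∀ h ∈ H, ∀ y : Linf G, m (Ltrans h y) = m y := by
      intro h hh y
      have h1 := hinv (delta h) y
      have h2 : ∑' s, mulIndic H (delta h) s * m (Ltrans s y) = m (Ltrans h y) :=
        tsum_mulIndic_delta H hh _
      have h3 : ∑' s, mulIndic H (delta h) s = 1 := by
        simpa using tsum_mulIndic_delta H hh (fun _ => (1 : ℂ))
      rw [h2, h3, one_mul] at h1
      exact h1
    have hfix : ∀ x ∈ LinfQuot H, bigE H m x = x := by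
      intro x hx
      apply linf_ext
      intro s
      rw [bigE_apply]
      have hkey : indicMul H (Ltrans s x) = x s • indic H := by
        apply linf_ext
        intro t
        rw [indicMul_apply, Ltrans_apply, lp_smul_apply]
        by_cases ht : t ∈ H
        · rw [hx s t ht, mul_comm]
        · rw [indic_apply, if_neg ht, zero_mul, mul_zero]
      rw [hkey, map_smul, smul_eq_mul, mul_div_assoc, div_self hc, mul_one]
    refine ⟨bigE H m, ⟨hfix one' (one'_mem_LinfQuot H), ?_, ?_, ?_⟩, hfix⟩
    · intro x hx s
      rw [bigE_apply]
      refine complex_div_nonneg (hmpos _ ?_) hc0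
      intro u
      rw [indicMul_apply, Ltrans_apply]
      by_cases hu : u ∈ H
      · rw [indic_apply, if_pos hu, one_mul]
        exact hx (s * u)
      · rw [indic_apply, if_neg hu, zero_mul]
    · intro x s h hh
      rw [bigE_apply, bigE_apply]
      congr 1
      have hkey : indicMul H (Ltrans (s * h) x) = Ltrans h (indicMul H (Ltrans s x)) := by
        apply linf_ext
        intro t
        simp only [indicMul_apply, Ltrans_apply, indic_apply, mul_assoc]
        by_cases ht : t ∈ H
        · rw [if_pos ht, if_pos ((H.mul_mem_cancel_left hh).mpr ht)]
        · rw [if_neg ht, if_neg (fun hcon => ht ((H.mul_mem_cancel_left hh).mp hcon))]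
      rw [hkey]
      exact hinvh h hh _
    · intro x f
      apply linf_ext
      intro t
      rw [rAct_apply]
      simp only [bigE_apply]
      have hFs : Summable (fun s => f s • indicMul H (Ltrans (s * t) x)) := by
        refine Summable.of_norm ?_
        refine Summable.of_nonneg_of_le (fun s => norm_nonneg _) (fun s => ?_)
          ((summable_norm f).mul_right ‖x‖)
        rw [norm_smul]
        exact mul_le_mul_of_nonneg_left
          (le_trans (norm_indicMul_le H _) (norm_Ltrans_le _ x)) (norm_nonneg _)
      have hkey : indicMul H (Ltrans t (rAct x f))
          = ∑' s, f s • indicMul H (Ltrans (s * t) x) := by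
        apply linf_ext
        intro u
        have h1 : (∑' s, f s • indicMul H (Ltrans (s * t) x)) u
            = ∑' s, f s * (indic H u * x (s * t * u)) := by
          rw [← evalCLM_apply u, (evalCLM (G := G) u).map_tsum hFs]
          refine tsum_congr fun s => ?_
          rw [evalCLM_apply, lp_smul_apply, indicMul_apply, Ltrans_apply]
        rw [h1, indicMul_apply, Ltrans_apply, rAct_apply, ← tsum_mul_left]
        refine tsum_congr fun s => ?_
        rw [mul_assoc s t u]
        ring
      rw [hkey, m.map_tsum hFs, ← tsum_div_const]
      refine tsum_congr fun s => ?_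
      rw [map_smul, smul_eq_mul, mul_div_assoc]

end QG
end
end

section
/- Let H be a subgroup of G and let μ ∈ ℓ∞(G)* be nonzero. Then μ is H-invariant if and only if f*μ = 0 for every f ∈ J¹(G,H). -/
set_option linter.unusedSectionVars false

open scoped ENNReal ComplexOrder

noncomputable section

namespace QG

variable {G : Type*} [Group G]

open Classical in
/-- `δ_h - δ_e` in `ℓ¹(G)`. -/
def deltaDiff (h : G) : L1 G :=
  ⟨fun t => (if t = h then (1 : ℂ) else 0) - (if t = 1 then 1 else 0), by
    apply memℓp_gen
    refine summable_of_ne_finset_zero (s := ({h, 1} : Finset G)) ?_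
    intro t ht
    simp only [Finset.mem_insert, Finset.mem_singleton, not_or] at ht
    simp [ht.1, ht.2]⟩

open Classical in
lemma deltaDiff_tsum (h : G) (g : G → ℂ) :
    ∑' s, (deltaDiff h : L1 G) s * g s = g h - g 1 := by
  have heq : (fun s => (deltaDiff h : L1 G) s * g s) =
      fun s => (if s = h then g h else 0) - (if s = 1 then g 1 else 0) := by
    funext s
    show ((if s = h then (1 : ℂ) else 0) - (if s = 1 then 1 else 0)) * g s = _
    by_cases h1 : s = h <;> by_cases h2 : s = 1 <;> simp [h1, h2] <;>
      simp_all <;> ring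
  rw [heq]
  have s1 : Summable fun s : G => (if s = h then g h else 0) :=
    summable_of_ne_finset_zero (s := ({h} : Finset G)) (by intro t ht; simp_all)
  have s2 : Summable fun s : G => (if s = 1 then g 1 else 0) :=
    summable_of_ne_finset_zero (s := ({1} : Finset G)) (by intro t ht; simp_all)
  rw [Summable.tsum_sub s1 s2, tsum_ite_eq, tsum_ite_eq]

/-- a nonzero `μ ∈ ℓ∞(G)*` is `H`-invariant iff `f * μ = 0` for all
`f ∈ J¹(G,H)`. -/
theorem statement14 (H : Subgroup G) (μ : DualLinf G) (hμ : μ ≠ 0) :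
    HInvariant H μ ↔ ∀ f ∈ J1 H, memAnnL μ f := by
  constructor
  · intro hinv f hf x
    have hx : starAct μ x ∈ LinfQuot H := by
      intro s h hh
      show μ (Ltrans (s * h) x) = μ (Ltrans s x)
      have he : Ltrans (s * h) x = Ltrans h (Ltrans s x) := by
        apply Subtype.ext
        funext t
        show x (s * h * t) = x (s * (h * t))
        rw [mul_assoc]
      rw [he, hinv h hh]
    simpa using hf _ hx
  · intro hann h hh x
    have hf : deltaDiff h ∈ J1 H := by
      intro y hy
      rw [deltaDiff_tsum]
      have := hy 1 h hh
      rw [one_mul] at this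
      rw [this, sub_self]
    have key := hann _ hf x
    rw [deltaDiff_tsum h (fun s => μ (Ltrans s x))] at key
    have h1 : Ltrans (1 : G) x = x := by
      apply Subtype.ext
      funext t
      show x (1 * t) = x t
      rw [one_mul]
    rw [h1] at key
    exact sub_eq_zero.mp key

end QG
end
end
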